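/- arXiv:2211.04127 — 2 statements merged into one kernel-verified Lean document; each statement's English description precedes it below -/
import Mathlib

section
/- Every finite group acting by isometries on a complete simply connected Riemannian manifold of non-positive sectional curvature (a Hadamard manifold) has a fixed point. -/
/-- Balanced binary iterated-midpoint average of `2^s` points. -/
private def binAvg {M : Type*} (m : M → M → M) : ℕ → (ℕ → M) → M
  | 0, f => f 0
  | s+1, f => m (binAvg m s f) (binAvg m s (fun i => f (i + 2 ^ s)))

private theorem binAvg_conical {M : Type*} [MetricSpace M] (m : M → M → M)
    (hconic : ∀ q x y : M, dist q (m x y) ≤ (dist q x + dist q y) / 2) :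
    ∀ (s : ℕ) (f : ℕ → M) (q : M),
      (2 ^ s : ℝ) * dist q (binAvg m s f) ≤ ∑ i ∈ Finset.range (2 ^ s), dist q (f i) := by
  intro s
  induction s with
  | zero => intro f q; simp [binAvg]
  | succ s ih =>
      intro f q
      have h1 := ih f q
      have h2 := ih (fun i => f (i + 2 ^ s)) q
      have hc := hconic q (binAvg m s f) (binAvg m s (fun i => f (i + 2 ^ s)))
      have hsplit : ∑ i ∈ Finset.range (2 ^ (s+1)), dist q (f i)
          = ∑ i ∈ Finset.range (2 ^ s), dist q (f i)
            + ∑ i ∈ Finset.range (2 ^ s), dist q (f (2 ^ s + i)) := by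
        rw [pow_succ, mul_two, Finset.sum_range_add]
      have hsplit' : ∑ i ∈ Finset.range (2 ^ s), dist q (f (2 ^ s + i))
          = ∑ i ∈ Finset.range (2 ^ s), dist q (f (i + 2 ^ s)) := by
        refine Finset.sum_congr rfl fun i _ => by rw [Nat.add_comm]
      have hpow : (2 : ℝ) ^ (s+1) = 2 ^ s * 2 := by ring
      calc (2 ^ (s+1) : ℝ) * dist q (binAvg m (s+1) f)
          ≤ (2 ^ (s+1) : ℝ) * ((dist q (binAvg m s f)
              + dist q (binAvg m s (fun i => f (i + 2 ^ s)))) / 2) := by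
            apply mul_le_mul_of_nonneg_left hc (by positivity)
        _ = (2 ^ s : ℝ) * dist q (binAvg m s f)
              + (2 ^ s : ℝ) * dist q (binAvg m s (fun i => f (i + 2 ^ s))) := by
            rw [hpow]; ring
        _ ≤ ∑ i ∈ Finset.range (2 ^ s), dist q (f i)
              + ∑ i ∈ Finset.range (2 ^ s), dist q (f (i + 2 ^ s)) := add_le_add h1 h2
        _ = ∑ i ∈ Finset.range (2 ^ (s+1)), dist q (f i) := by rw [hsplit, hsplit']

/-- Diameter of the orbit of `p` under the action `ρ`. -/
private noncomputable def orbDiam {M : Type*} [MetricSpace M] {G : Type*} [Group G]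
    [Fintype G] (ρ : G →* (M ≃ᵢ M)) (p : M) : ℝ :=
  Finset.univ.sup' Finset.univ_nonempty (fun z : G × G => dist (ρ z.1 p) (ρ z.2 p))

private theorem dist_le_orbDiam {M : Type*} [MetricSpace M] {G : Type*} [Group G]
    [Fintype G] (ρ : G →* (M ≃ᵢ M)) (p : M) (g g' : G) :
    dist (ρ g p) (ρ g' p) ≤ orbDiam ρ p :=
  Finset.le_sup' (f := fun z : G × G => dist (ρ z.1 p) (ρ z.2 p)) (Finset.mem_univ (g, g'))

private theorem orbDiam_nonneg {M : Type*} [MetricSpace M] {G : Type*} [Group G]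
    [Fintype G] (ρ : G →* (M ≃ᵢ M)) (p : M) : 0 ≤ orbDiam ρ p := by
  have := dist_le_orbDiam ρ p 1 1
  exact le_trans dist_nonneg this

private theorem orbDiam_le {M : Type*} [MetricSpace M] {G : Type*} [Group G]
    [Fintype G] (ρ : G →* (M ≃ᵢ M)) (p : M) {c : ℝ}
    (h : ∀ g g' : G, dist (ρ g p) (ρ g' p) ≤ c) : orbDiam ρ p ≤ c :=
  Finset.sup'_le _ _ fun z _ => h z.1 z.2

/-- Cartan's fixed point theorem. A Hadamard manifold is a complete simply connected
Riemannian manifold of non-positive sectional curvature; metrically this is a complete,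
simply connected geodesic space with a midpoint map `m` satisfying Busemann's
non-positive-curvature comparison inequality `d(m(x,y), m(x,z)) ≤ d(y,z)/2`
(for Riemannian manifolds this is equivalent to sectional curvature ≤ 0).
Every finite group acting by isometries on such a space has a fixed point. -/
theorem stmt_4 {M : Type*} [MetricSpace M] [Nonempty M] [CompleteSpace M]
    [SimplyConnectedSpace M]
    (m : M → M → M)
    (hmid : ∀ x y : M, dist x (m x y) = dist x y / 2 ∧ dist (m x y) y = dist x y / 2)
    (hnpc : ∀ x y z : M, dist (m x y) (m x z) ≤ dist y z / 2)
    {G : Type*} [Group G] [Finite G] (ρ : G →* (M ≃ᵢ M)) :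
    ∃ p : M, ∀ g : G, ρ g p = p := by
  classical
  letI : Fintype G := Fintype.ofFinite G
  -- the conical midpoint inequality
  have hconic : ∀ q x y : M, dist q (m x y) ≤ (dist q x + dist q y) / 2 := by
    intro q x y
    have h1 : dist q (m x y) ≤ dist q (m x q) + dist (m x q) (m x y) := dist_triangle _ _ _
    have h2 : dist q (m x q) = dist x q / 2 := by
      rw [dist_comm]; exact (hmid x q).2
    have h3 : dist (m x q) (m x y) ≤ dist q y / 2 := hnpc x q y
    calc dist q (m x y) ≤ dist x q / 2 + dist q y / 2 := by rw [← h2]; linarith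
      _ = (dist q x + dist q y) / 2 := by rw [dist_comm x q]; ring
  obtain ⟨n, ⟨e⟩⟩ := Finite.exists_equiv_fin G
  have npos : 0 < n := by
    rcases Fin.pos_iff_nonempty.2 ⟨e 1⟩ with h
    exact h
  set N : ℕ := 2 ^ n with hNdef
  have hnN : n ≤ N := (Nat.lt_two_pow_self (n := n)).le
  have hNpos : (0 : ℝ) < (N : ℝ) := by positivity
  set σ : ℕ → G := fun i => e.symm ⟨i % n, Nat.mod_lt i npos⟩ with hσ
  set T : M → M := fun p => binAvg m n (fun i => ρ (σ i) p) with hT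
  -- basic estimate
  have H1 : ∀ (p q : M),
      (N : ℝ) * dist q (T p) ≤ ∑ i ∈ Finset.range N, dist q (ρ (σ i) p) := by
    intro p q
    have := binAvg_conical m hconic n (fun i => ρ (σ i) p) q
    simpa [hT, hNdef] using this
  -- every group element is hit by σ below N
  have Hsurj : ∀ g : G, ∃ i, i < N ∧ σ i = g := by
    intro g
    refine ⟨(e g).1, lt_of_lt_of_le (e g).2 hnN, ?_⟩
    have : ((e g).1 % n) = (e g).1 := Nat.mod_eq_of_lt (e g).2
    simp [hσ, this, Fin.eta]
  -- estimate distance from T p to orbit points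
  have H3 : ∀ (p : M) (g : G),
      (N : ℝ) * dist (T p) (ρ g p) ≤ ((N : ℝ) - 1) * orbDiam ρ p := by
    intro p g
    obtain ⟨i₀, hi₀N, hi₀⟩ := Hsurj g
    have h1 := H1 p (ρ g p)
    have hi₀mem : i₀ ∈ Finset.range N := Finset.mem_range.2 hi₀N
    have hsum : ∑ i ∈ Finset.range N, dist (ρ g p) (ρ (σ i) p)
        = dist (ρ g p) (ρ (σ i₀) p)
          + ∑ i ∈ (Finset.range N).erase i₀, dist (ρ g p) (ρ (σ i) p) :=
      (Finset.add_sum_erase _ _ hi₀mem).symm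
    have hz : dist (ρ g p) (ρ (σ i₀) p) = 0 := by rw [hi₀]; simp
    have hbound : ∑ i ∈ (Finset.range N).erase i₀, dist (ρ g p) (ρ (σ i) p)
        ≤ ((((Finset.range N).erase i₀).card : ℝ)) * orbDiam ρ p := by
      have := Finset.sum_le_card_nsmul ((Finset.range N).erase i₀)
        (fun i => dist (ρ g p) (ρ (σ i) p)) (orbDiam ρ p)
        (fun i _ => dist_le_orbDiam ρ p g (σ i))
      simpa [nsmul_eq_mul] using this
    have hcard : (((Finset.range N).erase i₀).card : ℝ) = (N : ℝ) - 1 := by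
      rw [Finset.card_erase_of_mem hi₀mem, Finset.card_range]
      have : (1:ℕ) ≤ N := Nat.one_le_of_lt (Nat.lt_of_lt_of_le npos hnN)
      push_cast [Nat.cast_sub this]
      ring
    have : ∑ i ∈ Finset.range N, dist (ρ g p) (ρ (σ i) p) ≤ ((N : ℝ) - 1) * orbDiam ρ p := by
      rw [hsum, hz, zero_add]
      calc ∑ i ∈ (Finset.range N).erase i₀, dist (ρ g p) (ρ (σ i) p)
          ≤ ((((Finset.range N).erase i₀).card : ℝ)) * orbDiam ρ p := hbound
        _ = ((N : ℝ) - 1) * orbDiam ρ p := by rw [hcard]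
    calc (N : ℝ) * dist (T p) (ρ g p) = (N : ℝ) * dist (ρ g p) (T p) := by rw [dist_comm]
      _ ≤ ∑ i ∈ Finset.range N, dist (ρ g p) (ρ (σ i) p) := h1
      _ ≤ ((N : ℝ) - 1) * orbDiam ρ p := this
  -- contraction of the orbit diameter
  have H4 : ∀ (p : M) (h : G),
      dist (T p) (ρ h (T p)) ≤ (((N : ℝ) - 1) / N) * orbDiam ρ p := by
    intro p h
    have key : (N : ℝ) * dist (ρ h⁻¹ (T p)) (T p)
        ≤ ∑ i ∈ Finset.range N, dist (ρ h⁻¹ (T p)) (ρ (σ i) p) := H1 p (ρ h⁻¹ (T p))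
    have heq : ∀ i, dist (ρ h⁻¹ (T p)) (ρ (σ i) p) = dist (T p) (ρ (h * σ i) p) := by
      intro i
      have : ρ (h * σ i) p = ρ h (ρ (σ i) p) := by
        rw [map_mul]; rfl
      rw [this, ← IsometryEquiv.dist_eq (ρ h) (ρ h⁻¹ (T p)) (ρ (σ i) p)]
      congr 1
      have : ρ h (ρ h⁻¹ (T p)) = ρ (h * h⁻¹) (T p) := by rw [map_mul]; rfl
      rw [this, mul_inv_cancel, map_one]; rfl
    have hterm : ∀ i, dist (T p) (ρ (h * σ i) p) ≤ (((N : ℝ) - 1) / N) * orbDiam ρ p := by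
      intro i
      have := H3 p (h * σ i)
      rw [div_mul_eq_mul_div, le_div_iff₀ hNpos]
      linarith [this]
    have hsum : ∑ i ∈ Finset.range N, dist (ρ h⁻¹ (T p)) (ρ (σ i) p)
        ≤ (N : ℝ) * ((((N : ℝ) - 1) / N) * orbDiam ρ p) := by
      calc ∑ i ∈ Finset.range N, dist (ρ h⁻¹ (T p)) (ρ (σ i) p)
          = ∑ i ∈ Finset.range N, dist (T p) (ρ (h * σ i) p) :=
            Finset.sum_congr rfl fun i _ => heq i
        _ ≤ ∑ _i ∈ Finset.range N, (((N : ℝ) - 1) / N) * orbDiam ρ p :=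
            Finset.sum_le_sum fun i _ => hterm i
        _ = (N : ℝ) * ((((N : ℝ) - 1) / N) * orbDiam ρ p) := by
            rw [Finset.sum_const, Finset.card_range, nsmul_eq_mul]
    have hd : dist (T p) (ρ h (T p)) = dist (ρ h⁻¹ (T p)) (T p) := by
      have hx : ρ h⁻¹ (ρ h (T p)) = T p := by
        have e1 : ρ h⁻¹ (ρ h (T p)) = ρ (h⁻¹ * h) (T p) := by rw [map_mul]; rfl
        rw [e1, inv_mul_cancel, map_one]; rfl
      calc dist (T p) (ρ h (T p))
          = dist (ρ h⁻¹ (T p)) (ρ h⁻¹ (ρ h (T p))) := ((ρ h⁻¹).isometry.dist_eq _ _).symm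
        _ = dist (ρ h⁻¹ (T p)) (T p) := by rw [hx]
    rw [hd]
    have := le_trans key hsum
    exact le_of_mul_le_mul_left this hNpos
  set lam : ℝ := ((N : ℝ) - 1) / N with hlam
  have hlam0 : 0 ≤ lam := by
    apply div_nonneg _ hNpos.le
    have : (1:ℝ) ≤ (N:ℝ) := by
      exact_mod_cast Nat.one_le_of_lt (Nat.lt_of_lt_of_le npos hnN)
    linarith
  have hlam1 : lam < 1 := by
    rw [hlam, div_lt_one hNpos]; linarith
  -- orbit diameter contracts under T
  have H5 : ∀ p : M, orbDiam ρ (T p) ≤ lam * orbDiam ρ p := by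
    intro p
    apply orbDiam_le
    intro g g'
    have : dist (ρ g (T p)) (ρ g' (T p)) = dist (T p) (ρ (g⁻¹ * g') (T p)) := by
      rw [← IsometryEquiv.dist_eq (ρ g⁻¹) (ρ g (T p)) (ρ g' (T p))]
      have e1 : ρ g⁻¹ (ρ g (T p)) = ρ (g⁻¹ * g) (T p) := by rw [map_mul]; rfl
      have e2 : ρ g⁻¹ (ρ g' (T p)) = ρ (g⁻¹ * g') (T p) := by rw [map_mul]; rfl
      rw [e1, e2, inv_mul_cancel, map_one]; rfl
    rw [this]
    exact H4 p (g⁻¹ * g')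
  -- the step size is controlled by the orbit diameter
  have H6 : ∀ p : M, dist p (T p) ≤ orbDiam ρ p := by
    intro p
    have h1 := H1 p p
    have hterm : ∀ i, dist p (ρ (σ i) p) ≤ orbDiam ρ p := by
      intro i
      have : dist p (ρ (σ i) p) = dist (ρ (1:G) p) (ρ (σ i) p) := by
        rw [map_one]; rfl
      rw [this]; exact dist_le_orbDiam ρ p 1 (σ i)
    have hsum : ∑ i ∈ Finset.range N, dist p (ρ (σ i) p) ≤ (N : ℝ) * orbDiam ρ p := by
      calc ∑ i ∈ Finset.range N, dist p (ρ (σ i) p)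
          ≤ ∑ _i ∈ Finset.range N, orbDiam ρ p := Finset.sum_le_sum fun i _ => hterm i
        _ = (N : ℝ) * orbDiam ρ p := by
            rw [Finset.sum_const, Finset.card_range, nsmul_eq_mul]
    exact le_of_mul_le_mul_left (le_trans h1 hsum) hNpos
  -- iterate
  obtain ⟨p₀⟩ : Nonempty M := inferInstance
  set u : ℕ → M := fun k => T^[k] p₀ with hu
  have hus : ∀ k, u (k+1) = T (u k) := by
    intro k; rw [hu]; simp [Function.iterate_succ_apply']
  have hDk : ∀ k, orbDiam ρ (u k) ≤ lam ^ k * orbDiam ρ p₀ := by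
    intro k
    induction k with
    | zero => simp [hu]
    | succ k ih =>
        rw [hus k]
        calc orbDiam ρ (T (u k)) ≤ lam * orbDiam ρ (u k) := H5 (u k)
          _ ≤ lam * (lam ^ k * orbDiam ρ p₀) := by
              apply mul_le_mul_of_nonneg_left ih hlam0
          _ = lam ^ (k+1) * orbDiam ρ p₀ := by ring
  have hstep : ∀ k, dist (u k) (u (k+1)) ≤ orbDiam ρ p₀ * lam ^ k := by
    intro k
    rw [hus k]
    calc dist (u k) (T (u k)) ≤ orbDiam ρ (u k) := H6 (u k)
      _ ≤ lam ^ k * orbDiam ρ p₀ := hDk k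
      _ = orbDiam ρ p₀ * lam ^ k := by ring
  have hcauchy : CauchySeq u := cauchySeq_of_le_geometric lam (orbDiam ρ p₀) hlam1 hstep
  obtain ⟨p, hp⟩ := cauchySeq_tendsto_of_complete hcauchy
  refine ⟨p, fun g => ?_⟩
  have htend : Filter.Tendsto (fun k => dist (u k) (ρ g (u k))) Filter.atTop
      (nhds (dist p (ρ g p))) := by
    apply Filter.Tendsto.dist hp
    exact ((ρ g).continuous.tendsto p).comp hp
  have hbnd : ∀ k, dist (u k) (ρ g (u k)) ≤ lam ^ k * orbDiam ρ p₀ := by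
    intro k
    have : dist (u k) (ρ g (u k)) = dist (ρ (1:G) (u k)) (ρ g (u k)) := by
      rw [map_one]; rfl
    rw [this]
    exact le_trans (dist_le_orbDiam ρ (u k) 1 g) (hDk k)
  have hzero : Filter.Tendsto (fun k => lam ^ k * orbDiam ρ p₀) Filter.atTop (nhds 0) := by
    have := tendsto_pow_atTop_nhds_zero_of_lt_one hlam0 hlam1
    simpa using this.mul_const (orbDiam ρ p₀)
  have : dist p (ρ g p) ≤ 0 :=
    le_of_tendsto_of_tendsto' htend hzero fun k => hbnd k
  have : dist p (ρ g p) = 0 := le_antisymm this dist_nonneg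
  have := dist_eq_zero.1 this
  exact this.symm
end

section
/- Let Λ be a lattice (finitely generated free ℤ-module with a nondegenerate symmetric bilinear form) of signature (3, n) with n ≥ 1, and let G be a finite group acting on Λ by isometries preserving a positive-definite 3-dimensional subspace P of Λ ⊗ ℝ. Let I_G ⊆ Λ ⊗ ℝ be the sum of all irreducible real G-subrepresentations of Λ ⊗ ℝ isomorphic to a subrepresentation of P. Then the sublattice L_G = I_G^⊥ ∩ Λ is negative definite. -/
open Module

/-- Existence of an irreducible invariant subspace inside any nonzero invariant subspace. -/
lemma exists_irred_sub {V : Type*} [AddCommGroup V] [Module ℝ V] [FiniteDimensional ℝ V]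
    {G : Type*} [Group G] (ρ : G →* (V ≃ₗ[ℝ] V)) :
    ∀ (k : ℕ) (W : Submodule ℝ V), finrank ℝ W = k → W ≠ ⊥ →
      (∀ g : G, W.map (ρ g).toLinearMap = W) →
      ∃ W' : Submodule ℝ V, W' ≤ W ∧ W' ≠ ⊥ ∧
        (∀ g : G, W'.map (ρ g).toLinearMap = W') ∧
        (∀ W'' : Submodule ℝ V, W'' ≤ W' → (∀ g : G, W''.map (ρ g).toLinearMap = W'') →
          W'' = ⊥ ∨ W'' = W') := by
  intro k
  induction k using Nat.strong_induction_on with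
  | _ k ih =>
    intro W hk hWne hWinv
    by_cases hirr : ∀ W'' : Submodule ℝ V, W'' ≤ W →
        (∀ g : G, W''.map (ρ g).toLinearMap = W'') → W'' = ⊥ ∨ W'' = W
    · exact ⟨W, le_rfl, hWne, hWinv, hirr⟩
    · push_neg at hirr
      obtain ⟨W'', hle, hinv, hne⟩ := hirr
      obtain ⟨hne1, hne2⟩ := hne
      have hlt : W'' < W := lt_of_le_of_ne hle hne2
      have hfr : finrank ℝ W'' < k := hk ▸ Submodule.finrank_lt_finrank_of_lt hlt
      obtain ⟨W', h1, h2, h3, h4⟩ := ih _ hfr W'' rfl hne1 hinv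
      exact ⟨W', h1.trans hle, h2, h3, h4⟩

/-- Let `Λ` be a full-rank lattice in a real quadratic space `(V, B)` of signature
`(3, n)`, `n ≥ 1`, and let a finite group `G` act on `V` by isometries preserving `Λ`
and a positive-definite `3`-dimensional subspace `P`.  Let `I_G` be the sum of all
irreducible real `G`-subrepresentations of `V` isomorphic (equivariantly) to a
subrepresentation of `P`.  Then the sublattice `L_G = I_G^⊥ ∩ Λ` is negative
definite. -/
theorem stmt_5 {V : Type*} [AddCommGroup V] [Module ℝ V] [FiniteDimensional ℝ V]
    (B : LinearMap.BilinForm ℝ V) (hsymm : ∀ x y : V, B x y = B y x)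
    (hnd : ∀ x : V, (∀ y : V, B x y = 0) → x = 0)
    (n : ℕ) (hn : 1 ≤ n)
    (hsig : ∃ Vp Vn : Submodule ℝ V,
      (∀ v ∈ Vp, v ≠ 0 → 0 < B v v) ∧ (∀ v ∈ Vn, v ≠ 0 → B v v < 0) ∧
      (∀ v ∈ Vp, ∀ w ∈ Vn, B v w = 0) ∧ Vp ⊔ Vn = ⊤ ∧
      finrank ℝ Vp = 3 ∧ finrank ℝ Vn = n)
    -- the lattice: a finitely generated free full-rank `ℤ`-submodule
    (Λ : Submodule ℤ V) (hΛrank : Submodule.span ℝ (Λ : Set V) = ⊤)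
    (hΛfree : Module.Free ℤ Λ) (hΛfg : Module.Finite ℤ Λ)
    -- the finite group acting by isometries preserving `Λ`
    {G : Type*} [Group G] [Finite G] (ρ : G →* (V ≃ₗ[ℝ] V))
    (hiso : ∀ (g : G) (x y : V), B (ρ g x) (ρ g y) = B x y)
    (hΛinv : ∀ (g : G), ∀ x ∈ Λ, ρ g x ∈ Λ)
    -- the invariant positive-definite 3-space
    (P : Submodule ℝ V) (hPdim : finrank ℝ P = 3)
    (hPpos : ∀ v ∈ P, v ≠ 0 → 0 < B v v)
    (hPinv : ∀ g : G, P.map (ρ g).toLinearMap = P)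
    -- `I_G`: the sum of all irreducible subrepresentations isomorphic to one in `P`
    (IG : Submodule ℝ V)
    (hIG : IG = sSup {W : Submodule ℝ V |
      (∀ g : G, W.map (ρ g).toLinearMap = W) ∧ W ≠ ⊥ ∧
      (∀ W' : Submodule ℝ V, W' ≤ W → (∀ g : G, W'.map (ρ g).toLinearMap = W') →
        W' = ⊥ ∨ W' = W) ∧
      ∃ U : Submodule ℝ V, U ≤ P ∧ (∀ g : G, U.map (ρ g).toLinearMap = U) ∧
        ∃ e : W ≃ₗ[ℝ] U, ∀ (g : G) (w w' : W), (w' : V) = ρ g (w : V) →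
          (e w' : V) = ρ g (e w : V)}) :
    -- conclusion: `L_G = I_G^⊥ ∩ Λ` is negative definite
    ∀ x : V, x ∈ Λ → (∀ y ∈ IG, B x y = 0) → x ≠ 0 → B x x < 0 := by
  classical
  -- membership transfer under an invariant submodule
  have memInv : ∀ (S : Submodule ℝ V), (∀ g : G, S.map (ρ g).toLinearMap = S) →
      ∀ (g : G), ∀ v ∈ S, ρ g v ∈ S := by
    intro S hS g v hv
    rw [← hS g]
    exact ⟨v, hv, rfl⟩
  -- IG is G-invariant
  set 𝒮 : Set (Submodule ℝ V) := {W : Submodule ℝ V |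
      (∀ g : G, W.map (ρ g).toLinearMap = W) ∧ W ≠ ⊥ ∧
      (∀ W' : Submodule ℝ V, W' ≤ W → (∀ g : G, W'.map (ρ g).toLinearMap = W') →
        W' = ⊥ ∨ W' = W) ∧
      ∃ U : Submodule ℝ V, U ≤ P ∧ (∀ g : G, U.map (ρ g).toLinearMap = U) ∧
        ∃ e : W ≃ₗ[ℝ] U, ∀ (g : G) (w w' : W), (w' : V) = ρ g (w : V) →
          (e w' : V) = ρ g (e w : V)} with h𝒮
  -- Step 1 : P ≤ IG
  have hPIG : P ≤ IG := by
    by_contra hPn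
    set K : Submodule ℝ V := IG ⊓ P with hK
    have hKP : K ≤ P := inf_le_right
    have hKlt : K < P := lt_of_le_of_ne hKP (fun h => hPn (h ▸ (inf_le_left : K ≤ IG)))
    have hKfr : finrank ℝ K < finrank ℝ P := Submodule.finrank_lt_finrank_of_lt hKlt
    -- IG is invariant
    have hIGinv : ∀ g : G, ∀ v ∈ IG, ρ g v ∈ IG := by
      intro g v hv
      rw [hIG] at hv ⊢
      rw [sSup_eq_iSup] at hv ⊢
      have : (⨆ W ∈ 𝒮, W).map (ρ g).toLinearMap = ⨆ W ∈ 𝒮, W := by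
        rw [Submodule.map_iSup]
        refine iSup_congr fun W => ?_
        rw [Submodule.map_iSup]
        exact iSup_congr fun hW => hW.1 g
      rw [← this]
      exact ⟨v, hv, rfl⟩
    have hKinv : ∀ g : G, ∀ v ∈ K, ρ g v ∈ K :=
      fun g v hv => ⟨hIGinv g v hv.1, memInv P hPinv g v hv.2⟩
    -- the orthogonal complement of K
    set O : Submodule ℝ V := B.orthogonal K with hO
    have hOinv : ∀ g : G, ∀ v ∈ O, ρ g v ∈ O := by
      intro g v hv k hk
      have hk' : ρ g⁻¹ k ∈ K := hKinv g⁻¹ k hk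
      have : B (ρ g (ρ g⁻¹ k)) (ρ g v) = B (ρ g⁻¹ k) v := hiso g _ _
      have hfix : ρ g (ρ g⁻¹ k) = k := by
        have : ρ g (ρ g⁻¹ k) = (ρ g * ρ g⁻¹) k := rfl
        rw [this, ← map_mul, mul_inv_cancel, map_one]; rfl
      rw [hfix] at this
      exact this.trans (hv _ hk')
    -- invariance as map-equalities
    have toMap : ∀ (S : Submodule ℝ V), (∀ g : G, ∀ v ∈ S, ρ g v ∈ S) →
        ∀ g : G, S.map (ρ g).toLinearMap = S := by
      intro S hS g
      apply le_antisymm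
      · rintro _ ⟨v, hv, rfl⟩; exact hS g v hv
      · intro v hv
        refine ⟨ρ g⁻¹ v, hS g⁻¹ v hv, ?_⟩
        have : ρ g (ρ g⁻¹ v) = (ρ g * ρ g⁻¹) v := rfl
        show ρ g (ρ g⁻¹ v) = v
        rw [this, ← map_mul, mul_inv_cancel, map_one]; rfl
    -- W := P ⊓ O is invariant and nonzero
    set W : Submodule ℝ V := P ⊓ O with hW
    have hWP : W ≤ P := inf_le_left
    have hWinvmem : ∀ g : G, ∀ v ∈ W, ρ g v ∈ W :=
      fun g v hv => ⟨memInv P hPinv g v hv.1, hOinv g v hv.2⟩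
    have hWinv : ∀ g : G, W.map (ρ g).toLinearMap = W := toMap W hWinvmem
    have hBrefl : B.IsRefl := fun x y h => by rw [hsymm]; exact h
    have hBnd : B.Nondegenerate :=
      ⟨hnd, fun y hy => hnd y fun x => (hsymm y x).trans (hy x)⟩
    have hOfr : finrank ℝ O = finrank ℝ V - finrank ℝ K :=
      LinearMap.BilinForm.finrank_orthogonal hBnd K
    have hWne : W ≠ ⊥ := by
      intro hbot
      have h1 : finrank ℝ ↥(P ⊔ O) + finrank ℝ ↥(P ⊓ O) = finrank ℝ P + finrank ℝ O :=
        Submodule.finrank_sup_add_finrank_inf_eq P O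
      rw [← hW, hbot, finrank_bot, add_zero] at h1
      have h2 : finrank ℝ ↥(P ⊔ O) ≤ finrank ℝ V := Submodule.finrank_le _
      have h3 : finrank ℝ K ≤ finrank ℝ V := Submodule.finrank_le _
      omega
    -- find an irreducible invariant subspace of W
    obtain ⟨W', hW'le, hW'ne, hW'inv, hW'irr⟩ :=
      exists_irred_sub ρ (finrank ℝ W) W rfl hWne hWinv
    -- W' belongs to 𝒮
    have hW'mem : W' ∈ 𝒮 := by
      refine ⟨hW'inv, hW'ne, hW'irr, W', hW'le.trans hWP, hW'inv,
        LinearEquiv.refl ℝ W', ?_⟩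
      intro g w w' h
      exact h
    have hW'IG : W' ≤ IG := by rw [hIG]; exact le_sSup hW'mem
    -- a nonzero vector of W' yields a contradiction
    obtain ⟨w, hwW', hwne⟩ := Submodule.exists_mem_ne_zero_of_ne_bot hW'ne
    have hwP : w ∈ P := (hW'le.trans hWP) hwW'
    have hwK : w ∈ K := ⟨hW'IG hwW', hwP⟩
    have hwO : w ∈ O := (hW'le hwW').2
    have : B w w = 0 := hwO w hwK
    exact absurd this (ne_of_gt (hPpos w hwP hwne))
  -- Step 2 : the signature argument
  intro x hxΛ hxorth hxne
  by_contra hlt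
  push_neg at hlt
  have hxP : ∀ y ∈ P, B x y = 0 := fun y hy => hxorth y (hPIG hy)
  obtain ⟨Vp, Vn, hVp, hVn, _, hsup, hVpdim, hVndim⟩ := hsig
  have hxnotP : x ∉ P := by
    intro hxp
    have := hPpos x hxp hxne
    rw [hxP x hxp] at this
    exact lt_irrefl 0 this
  set Wx : Submodule ℝ V := P ⊔ (ℝ ∙ x) with hWx
  -- Wx is positive semidefinite
  have hWsemi : ∀ w ∈ Wx, 0 ≤ B w w := by
    intro w hw
    obtain ⟨p, hp, z, hz, rfl⟩ := Submodule.mem_sup.mp hw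
    obtain ⟨t, rfl⟩ := Submodule.mem_span_singleton.mp hz
    have h1 : B x p = 0 := hxP p hp
    have h2 : B p x = 0 := by rw [hsymm]; exact h1
    have : B (p + t • x) (p + t • x) = B p p + t * t * B x x := by
      simp [map_add, LinearMap.add_apply, map_smul, LinearMap.smul_apply, h1, h2,
        smul_eq_mul]
      ring
    rw [this]
    have hpp : 0 ≤ B p p := by
      rcases eq_or_ne p 0 with rfl | hp0
      · simp
      · exact le_of_lt (hPpos p hp hp0)
    have : 0 ≤ t * t * B x x := mul_nonneg (mul_self_nonneg t) hlt
    linarith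
  -- Wx ∩ Vn = ⊥
  have hWVn : Wx ⊓ Vn = ⊥ := by
    rw [Submodule.eq_bot_iff]
    intro v ⟨hv1, hv2⟩
    by_contra hv0
    exact absurd (hWsemi v hv1) (not_le.mpr (hVn v hv2 hv0))
  -- dimension counts
  have hPx : P ⊓ (ℝ ∙ x) = ⊥ := by
    rw [Submodule.eq_bot_iff]
    intro v ⟨hv1, hv2⟩
    obtain ⟨t, rfl⟩ := Submodule.mem_span_singleton.mp hv2
    rcases eq_or_ne t 0 with rfl | ht
    · simp
    · exfalso
      apply hxnotP
      have : t⁻¹ • (t • x) ∈ P := Submodule.smul_mem P t⁻¹ hv1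
      rwa [smul_smul, inv_mul_cancel₀ ht, one_smul] at this
  have hWxdim : finrank ℝ Wx = 4 := by
    have h1 : finrank ℝ ↥(P ⊔ (ℝ ∙ x)) + finrank ℝ ↥(P ⊓ (ℝ ∙ x)) =
        finrank ℝ P + finrank ℝ ↥(ℝ ∙ x) := Submodule.finrank_sup_add_finrank_inf_eq P (ℝ ∙ x)
    rw [hPx, finrank_bot, add_zero, hPdim, finrank_span_singleton hxne] at h1
    exact h1
  have h2 : finrank ℝ Wx + finrank ℝ Vn = finrank ℝ ↥(Wx ⊔ Vn) := by
    have := Submodule.finrank_sup_add_finrank_inf_eq Wx Vn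
    rw [hWVn, finrank_bot, add_zero] at this
    exact this.symm
  have h3 : finrank ℝ ↥(Wx ⊔ Vn) ≤ finrank ℝ V := Submodule.finrank_le _
  have h4 : finrank ℝ V ≤ finrank ℝ Vp + finrank ℝ Vn := by
    have := Submodule.finrank_sup_add_finrank_inf_eq Vp Vn
    rw [hsup] at this
    have htop : finrank ℝ ↥(⊤ : Submodule ℝ V) = finrank ℝ V := finrank_top ℝ V
    omega
  omega
end
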